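/- Let K, N_0, η, Ω_S, Ω_D, P_T, Q > 0, set α = 2K·N_0·Ω_D + 4K·N_0·Ω_S and P_R* = (−α + √(48·P_T·K·N_0·η·Ω_S·Ω_D + α²)) / (6·η·Ω_D). Then P_R* is the unique positive real number P_R satisfying the rate-balance equation ((P_T − P_R)·Ω_S·(2K/3)·Q) / (N_0 + (3η/(2K))·P_R) = (P_R·Ω_D·(K/3)·Q) / N_0; equivalently, P_R* is the unique positive root of the quadratic 3·η·Ω_D·P_R² + α·P_R − 4·K·N_0·Ω_S·P_T = 0. -/

import Mathlib

open Real

/-- Proposition 1 (power allocation): `P_R*` is the unique positive solution of the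
rate-balance equation `((P_T−P_R)·Ω_S·(2K/3)·Q)/(N_0+(3η/(2K))·P_R)
= (P_R·Ω_D·(K/3)·Q)/N_0`, equivalently the unique positive root of the quadratic
`3ηΩ_D·P_R² + α·P_R − 4K·N_0·Ω_S·P_T = 0`, where
`α = 2K·N_0·Ω_D + 4K·N_0·Ω_S`. -/
theorem optimal_relay_power_unique
    (K N_0 η Ω_S Ω_D P_T Q : ℝ)
    (hK : 0 < K) (hN0 : 0 < N_0) (hη : 0 < η) (hΩS : 0 < Ω_S) (hΩD : 0 < Ω_D)
    (hPT : 0 < P_T) (hQ : 0 < Q)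
    (α PRstar : ℝ)
    (hα : α = 2 * K * N_0 * Ω_D + 4 * K * N_0 * Ω_S)
    (hPRstar : PRstar =
      (-α + Real.sqrt (48 * P_T * K * N_0 * η * Ω_S * Ω_D + α ^ 2)) / (6 * η * Ω_D)) :
    (0 < PRstar ∧
      ((P_T - PRstar) * Ω_S * (2 * K / 3) * Q) / (N_0 + (3 * η / (2 * K)) * PRstar) =
        (PRstar * Ω_D * (K / 3) * Q) / N_0 ∧
      (∀ x : ℝ, 0 < x →
        ((P_T - x) * Ω_S * (2 * K / 3) * Q) / (N_0 + (3 * η / (2 * K)) * x) =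
          (x * Ω_D * (K / 3) * Q) / N_0 → x = PRstar)) ∧
    (3 * η * Ω_D * PRstar ^ 2 + α * PRstar - 4 * K * N_0 * Ω_S * P_T = 0 ∧
      (∀ x : ℝ, 0 < x →
        3 * η * Ω_D * x ^ 2 + α * x - 4 * K * N_0 * Ω_S * P_T = 0 → x = PRstar)) := by
  have hα0 : 0 < α := by rw [hα]; positivity
  have hD : 0 < 48 * P_T * K * N_0 * η * Ω_S * Ω_D + α ^ 2 := by positivity
  have hsq : Real.sqrt (48 * P_T * K * N_0 * η * Ω_S * Ω_D + α ^ 2) ^ 2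
      = 48 * P_T * K * N_0 * η * Ω_S * Ω_D + α ^ 2 := Real.sq_sqrt hD.le
  have hslt : α < Real.sqrt (48 * P_T * K * N_0 * η * Ω_S * Ω_D + α ^ 2) := by
    nlinarith [Real.sqrt_nonneg (48 * P_T * K * N_0 * η * Ω_S * Ω_D + α ^ 2),
      mul_pos (mul_pos (mul_pos (mul_pos (mul_pos (mul_pos hPT hK) hN0) hη) hΩS) hΩD) hQ,
      mul_pos (mul_pos (mul_pos (mul_pos (mul_pos hPT hK) hN0) hη) hΩS) hΩD]
  have hP : 0 < PRstar := by
    rw [hPRstar]; apply div_pos; linarith; positivity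
  have hquad : 3 * η * Ω_D * PRstar ^ 2 + α * PRstar - 4 * K * N_0 * Ω_S * P_T = 0 := by
    have h6 : (6 * η * Ω_D) ≠ 0 := by positivity
    rw [hPRstar]
    field_simp
    have hsq' : Real.sqrt (η * Ω_D * 48 * P_T * K * N_0 * Ω_S + α ^ 2) ^ 2
        = 48 * P_T * K * N_0 * η * Ω_S * Ω_D + α ^ 2 := by
      rw [show η * Ω_D * 48 * P_T * K * N_0 * Ω_S = 48 * P_T * K * N_0 * η * Ω_S * Ω_D by ring]
      exact hsq
    linear_combination 3 * hsq'
  have huniq : ∀ x : ℝ, 0 < x →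
      3 * η * Ω_D * x ^ 2 + α * x - 4 * K * N_0 * Ω_S * P_T = 0 → x = PRstar := by
    intro x hx hxq
    have hfac : (x - PRstar) * (3 * η * Ω_D * (x + PRstar) + α) = 0 := by
      linear_combination hxq - hquad
    rcases mul_eq_zero.mp hfac with h | h
    · linarith
    · nlinarith [mul_pos (mul_pos hη hΩD) (add_pos hx hP)]
  have key : ∀ x : ℝ, 0 < x →
      (((P_T - x) * Ω_S * (2 * K / 3) * Q) / (N_0 + (3 * η / (2 * K)) * x) =
        (x * Ω_D * (K / 3) * Q) / N_0 ↔
      3 * η * Ω_D * x ^ 2 + α * x - 4 * K * N_0 * Ω_S * P_T = 0) := by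
    intro x hx
    have hden : 0 < N_0 + (3 * η / (2 * K)) * x := by positivity
    rw [div_eq_div_iff hden.ne' hN0.ne']
    constructor
    · intro h
      rw [hα]
      have hK' : K ≠ 0 := hK.ne'
      field_simp at h
      have h2 : (3 * K * Q) * (3 * η * Ω_D * x ^ 2 +
          (2 * K * N_0 * Ω_D + 4 * K * N_0 * Ω_S) * x - 4 * K * N_0 * Ω_S * P_T) = 0 := by
        linear_combination (-(3 * K * Q)) * h
      have h3 : (3 * K * Q) ≠ 0 := by positivity
      exact (mul_eq_zero.mp h2).resolve_left h3
    · intro h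
      rw [hα] at h
      field_simp
      linear_combination -h
  exact ⟨⟨hP, (key PRstar hP).mpr hquad,
      fun x hx hxe => huniq x hx ((key x hx).mp hxe)⟩, hquad, huniq⟩
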